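/- Let H be a self-adjoint n×n matrix and U a positive semidefinite n×n matrix, and let f: ℝ → ℝ be continuously differentiable with bounded derivative. Then ∫_δ^{1-δ} Tr(U f'(H + t U)) dt = Tr(f(H + (1-δ)U)) - Tr(f(H + δU)) for any 0 ≤ δ ≤ 1/2. -/

import Mathlib

/-- Functional calculus for a (real symmetric) matrix, extended by `0` to all matrices. -/
noncomputable def matFun {n : ℕ} (f : ℝ → ℝ) (A : Matrix (Fin n) (Fin n) ℝ) :
    Matrix (Fin n) (Fin n) ℝ :=
  if h : A.IsHermitian then h.cfc f else 0

open Polynomial Matrix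

noncomputable def pInt (q : ℝ[X]) : ℝ[X] := q.sum fun k a => C (a / (k+1)) * X^(k+1)

lemma derivative_pInt (q : ℝ[X]) : (pInt q).derivative = q := by
  conv_rhs => rw [← Polynomial.sum_C_mul_X_pow_eq q]
  rw [pInt, Polynomial.sum, Polynomial.sum, map_sum]
  refine Finset.sum_congr rfl fun k hk => ?_
  rw [derivative_C_mul, derivative_X_pow]
  push_cast
  rw [← mul_assoc, ← _root_.map_mul]
  have h : ((k:ℝ) + 1) ≠ 0 := by positivity
  rw [div_mul_cancel₀ _ h]

section MatDeriv
variable {n : ℕ}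
attribute [local instance] Matrix.linftyOpNormedAddCommGroup Matrix.linftyOpNormedRing
  Matrix.linftyOpNormedAlgebra

lemma hasDerivAt_affine (H U : Matrix (Fin n) (Fin n) ℝ) (t : ℝ) :
    HasDerivAt (fun s : ℝ => H + s • U) U t := by
  have h := ((hasDerivAt_id t).smul_const U).const_add H
  rw [one_smul] at h
  exact h

lemma hasDerivAt_pow_mat (H U : Matrix (Fin n) (Fin n) ℝ) (k : ℕ) (t : ℝ) :
    HasDerivAt (fun s : ℝ => (H + s • U) ^ k)
      (∑ j ∈ Finset.range k, (H + t • U) ^ j * U * (H + t • U) ^ (k - 1 - j)) t := by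
  induction k with
  | zero =>
    simp only [pow_zero, Finset.sum_range_zero]
    exact hasDerivAt_const t (1 : Matrix (Fin n) (Fin n) ℝ)
  | succ k ih =>
    have h := ih.mul (hasDerivAt_affine H U t)
    have : (fun s : ℝ => (H + s • U) ^ k * (H + s • U)) = fun s : ℝ => (H + s • U) ^ (k+1) := by
      funext s; rw [← pow_succ]
    simp only [Pi.mul_def] at h
    rw [this] at h
    refine h.congr_deriv (Eq.symm ?_)
    rw [Finset.sum_range_succ, Finset.sum_mul]
    have e1 : ∀ j ∈ Finset.range k,
        (H + t • U) ^ j * U * (H + t • U) ^ (k - 1 - j) * (H + t • U)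
          = (H + t • U) ^ j * U * (H + t • U) ^ (k + 1 - 1 - j) := by
      intro j hj
      rw [Finset.mem_range] at hj
      rw [mul_assoc ((H + t • U) ^ j * U), ← pow_succ]
      congr 2
      omega
    rw [Finset.sum_congr rfl e1]
    simp [add_comm, Nat.add_sub_cancel]
end MatDeriv

section MatDeriv2
variable {n : ℕ}
attribute [local instance] Matrix.linftyOpNormedAddCommGroup Matrix.linftyOpNormedRing
  Matrix.linftyOpNormedAlgebra

noncomputable def traceCLM (n : ℕ) : Matrix (Fin n) (Fin n) ℝ →L[ℝ] ℝ :=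
  LinearMap.toContinuousLinearMap (Matrix.traceLinearMap (Fin n) ℝ ℝ)

lemma traceCLM_apply (A : Matrix (Fin n) (Fin n) ℝ) : traceCLM n A = A.trace := rfl

lemma trace_sum_comm (A U : Matrix (Fin n) (Fin n) ℝ) (k : ℕ) :
    (∑ j ∈ Finset.range k, A ^ j * U * A ^ (k - 1 - j)).trace
      = k * (U * A ^ (k - 1)).trace := by
  rw [trace_sum]
  rw [Finset.sum_congr rfl (g := fun _ => (U * A ^ (k-1)).trace) fun j hj => ?_]
  · simp [mul_comm]
  · rw [Finset.mem_range] at hj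
    rw [mul_assoc, trace_mul_comm, mul_assoc, ← pow_add]
    have e : k - 1 - j + j = k - 1 := by omega
    rw [e]

lemma hasDerivAt_trace_aeval (H U : Matrix (Fin n) (Fin n) ℝ) (p : ℝ[X]) (t : ℝ) :
    HasDerivAt (fun s : ℝ => (Polynomial.aeval (H + s • U) p).trace)
      ((U * Polynomial.aeval (H + t • U) p.derivative).trace) t := by
  induction p using Polynomial.induction_on' with
  | add p q hp hq =>
    simpa [mul_add, trace_add, Pi.add_def] using hp.add hq
  | monomial k a =>
    have h0 : HasDerivAt (fun s : ℝ => ((H + s • U) ^ k).trace)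
        ((∑ j ∈ Finset.range k, (H + t • U) ^ j * U * (H + t • U) ^ (k - 1 - j)).trace) t :=
      (traceCLM n).hasFDerivAt.comp_hasDerivAt t (hasDerivAt_pow_mat H U k t)
    have h1 := h0.const_mul a
    have e : (fun s : ℝ => a * ((H + s • U) ^ k).trace)
        = fun s : ℝ => (Polynomial.aeval (H + s • U) (Polynomial.monomial k a)).trace := by
      funext s
      simp [Polynomial.aeval_monomial, Algebra.algebraMap_eq_smul_one, smul_mul_assoc,
        trace_smul, smul_eq_mul]
    rw [e] at h1
    refine h1.congr_deriv (Eq.symm ?_)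
    rw [trace_sum_comm, Polynomial.derivative_monomial]
    simp [Polynomial.aeval_monomial, Algebra.algebraMap_eq_smul_one, smul_mul_assoc,
      mul_smul_comm, trace_smul, smul_eq_mul]
    ring
end MatDeriv2

section Spec
variable {n : ℕ} {A : Matrix (Fin n) (Fin n) ℝ}

lemma trace_cfc' (hA : A.IsHermitian) (g : ℝ → ℝ) :
    (hA.cfc g).trace = ∑ i, g (hA.eigenvalues i) := by
  rw [Matrix.IsHermitian.cfc, Unitary.conjStarAlgAut_apply, trace_mul_comm, ← mul_assoc]
  rw [Unitary.star_mul_self_of_mem (SetLike.coe_mem _), one_mul, trace_diagonal]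
  simp

lemma aeval_eq_cfc (hA : A.IsHermitian) (p : ℝ[X]) :
    Polynomial.aeval A p = hA.cfc p.eval := by
  rw [← Matrix.IsHermitian.cfc_eq]
  exact (cfc_polynomial p A hA).symm

lemma cfc_sub' (hA : A.IsHermitian) (g h : ℝ → ℝ) :
    hA.cfc g - hA.cfc h = hA.cfc (fun x => g x - h x) := by
  rw [Matrix.IsHermitian.cfc, Matrix.IsHermitian.cfc, Matrix.IsHermitian.cfc]
  simp only [Unitary.conjStarAlgAut_apply]
  rw [← sub_mul, ← mul_sub, diagonal_sub]
  congr 2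

lemma psd_diag_nonneg {U : Matrix (Fin n) (Fin n) ℝ} (hU : U.PosSemidef) (i : Fin n) :
    0 ≤ U i i := by
  exact hU.diag_nonneg

end Spec

section Bound
variable {n : ℕ} {A U : Matrix (Fin n) (Fin n) ℝ}

lemma trace_mul_diag (B : Matrix (Fin n) (Fin n) ℝ) (d : Fin n → ℝ) :
    (B * diagonal d).trace = ∑ i, B i i * d i := by
  unfold Matrix.trace
  congr 1
  funext i
  rw [diag_apply, mul_diagonal]

lemma trace_mul_cfc_bound (hA : A.IsHermitian) (hU : U.PosSemidef) (g : ℝ → ℝ) {ε : ℝ}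
    (hg : ∀ i, |g (hA.eigenvalues i)| ≤ ε) :
    |(U * hA.cfc g).trace| ≤ U.trace * ε := by
  set V : Matrix (Fin n) (Fin n) ℝ := (hA.eigenvectorUnitary : Matrix (Fin n) (Fin n) ℝ) with hV
  have hVV : V * star V = 1 := Unitary.mul_star_self_of_mem (SetLike.coe_mem _)
  have hsVV : star V * V = 1 := Unitary.star_mul_self_of_mem (SetLike.coe_mem _)
  set d : Fin n → ℝ := fun i => g (hA.eigenvalues i) with hd
  have hcfc : hA.cfc g = V * diagonal d * star V := by
    rw [Matrix.IsHermitian.cfc, Unitary.conjStarAlgAut_apply]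
    congr 1
  have h1 : (U * hA.cfc g).trace = ((star V * U * V) * diagonal d).trace := by
    rw [hcfc, ← mul_assoc, ← mul_assoc, trace_mul_comm, ← mul_assoc, ← mul_assoc]
  have hW : (star V * U * V).PosSemidef := by
    have := hU.conjTranspose_mul_mul_same V
    rwa [← star_eq_conjTranspose] at this
  have hWtr : (star V * U * V).trace = U.trace := by
    rw [trace_mul_comm, ← mul_assoc, hVV, one_mul]
  rw [h1, trace_mul_diag]
  calc |∑ i, (star V * U * V) i i * d i| ≤ ∑ i, |(star V * U * V) i i * d i| :=
        Finset.abs_sum_le_sum_abs _ _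
    _ ≤ ∑ i, (star V * U * V) i i * ε := by
        refine Finset.sum_le_sum fun i _ => ?_
        rw [abs_mul, abs_of_nonneg (psd_diag_nonneg hW i)]
        exact mul_le_mul_of_nonneg_left (hg i) (psd_diag_nonneg hW i)
    _ = U.trace * ε := by rw [← Finset.sum_mul, ← hWtr]; rfl
end Bound

section EigBound
variable {n : ℕ}
attribute [local instance] Matrix.linftyOpNormedAddCommGroup Matrix.linftyOpNormedRing
  Matrix.linftyOpNormedAlgebra

lemma eig_abs_le {A : Matrix (Fin n) (Fin n) ℝ} (hA : A.IsHermitian) (i : Fin n) :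
    |hA.eigenvalues i| ≤ ‖A‖ * ‖(1 : Matrix (Fin n) (Fin n) ℝ)‖ := by
  have h := hA.eigenvalues_mem_spectrum_real i
  have h2 := spectrum.norm_le_norm_mul_of_mem (𝕜 := ℝ) h
  rwa [Real.norm_eq_abs] at h2

lemma norm_affine_le (H U : Matrix (Fin n) (Fin n) ℝ) {t : ℝ} (h0 : 0 ≤ t) (h1 : t ≤ 1) :
    ‖H + t • U‖ ≤ ‖H‖ + ‖U‖ := by
  refine (norm_add_le _ _).trans ?_
  have : ‖t • U‖ ≤ ‖U‖ := by
    rw [norm_smul, Real.norm_eq_abs, abs_of_nonneg h0]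
    nlinarith [norm_nonneg U]
  linarith
end EigBound

lemma exists_poly_approx (f : ℝ → ℝ) (hf : ContDiff ℝ 1 f) (R : ℝ) (hR : 0 ≤ R) {ε : ℝ}
    (hε : 0 < ε) :
    ∃ p : ℝ[X], (∀ x ∈ Set.Icc (-R) R, |p.eval x - f x| ≤ ε) ∧
      (∀ x ∈ Set.Icc (-R) R, |p.derivative.eval x - deriv f x| ≤ ε) := by
  have hc : ContinuousOn (deriv f) (Set.Icc (-R) R) :=
    (hf.continuous_deriv le_rfl).continuousOn
  have hε' : 0 < min (ε / (R + 1)) ε := lt_min (by positivity) hε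
  obtain ⟨q, hq⟩ := exists_polynomial_near_of_continuousOn (-R) R (deriv f) hc _ hε'
  set p : ℝ[X] := pInt q + Polynomial.C (f 0 - (pInt q).eval 0) with hpdef
  have hdp : p.derivative = q := by
    rw [hpdef, derivative_add, derivative_pInt, derivative_C, add_zero]
  have h0 : (0:ℝ) ∈ Set.Icc (-R) R := by constructor <;> linarith
  refine ⟨p, fun x hx => ?_, fun x hx => ?_⟩
  · have key : ∀ y ∈ Set.Icc (-R) R, HasDerivWithinAt (fun z => p.eval z - f z)
        (q.eval y - deriv f y) (Set.Icc (-R) R) y := by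
      intro y _
      have h1 : HasDerivAt (fun z => p.eval z) (q.eval y) y := by
        have := p.hasDerivAt y
        rwa [hdp] at this
      have h2 : HasDerivAt f (deriv f y) y :=
        ((hf.differentiable one_ne_zero) y).hasDerivAt
      exact (h1.sub h2).hasDerivWithinAt
    have hbd : ∀ y ∈ Set.Icc (-R) R, ‖q.eval y - deriv f y‖ ≤ min (ε / (R + 1)) ε := by
      intro y hy
      rw [Real.norm_eq_abs]
      exact (hq y hy).le
    have := (convex_Icc (-R) R).norm_image_sub_le_of_norm_hasDerivWithin_le key hbd h0 hx
    have hp0 : p.eval 0 - f 0 = 0 := by simp [hpdef]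
    rw [hp0, sub_zero, sub_zero, Real.norm_eq_abs, Real.norm_eq_abs] at this
    have hxR : |x| ≤ R := abs_le.2 hx
    calc |p.eval x - f x| ≤ min (ε / (R + 1)) ε * |x| := this
      _ ≤ (ε / (R + 1)) * R := by
          apply mul_le_mul (min_le_left _ _) hxR (abs_nonneg x) (by positivity)
      _ ≤ ε := by
          rw [div_mul_eq_mul_div, div_le_iff₀ (by positivity)]
          nlinarith
  · rw [hdp]
    exact (hq x hx).le.trans (min_le_right _ _)

section Cont
variable {n : ℕ}
attribute [local instance] Matrix.linftyOpNormedAddCommGroup Matrix.linftyOpNormedRing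
  Matrix.linftyOpNormedAlgebra

lemma continuous_trace_aeval (H U W : Matrix (Fin n) (Fin n) ℝ) (q : ℝ[X]) :
    Continuous fun t : ℝ => (W * Polynomial.aeval (H + t • U) q).trace := by
  have h1 : Continuous fun t : ℝ => Polynomial.aeval (H + t • U) q := by
    induction q using Polynomial.induction_on' with
    | add p q hp hq => simpa [map_add, Pi.add_def] using hp.add hq
    | monomial k a =>
      simp only [Polynomial.aeval_monomial]
      exact continuous_const.mul ((continuous_const.add
        (continuous_id.smul continuous_const)).pow k)
  exact (traceCLM n).continuous.comp (continuous_const.mul h1)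
end Cont
section Main
variable {n : ℕ}
attribute [local instance] Matrix.linftyOpNormedAddCommGroup Matrix.linftyOpNormedRing
  Matrix.linftyOpNormedAlgebra

lemma main_bs (n : ℕ) (H U : Matrix (Fin n) (Fin n) ℝ)
    (hH : H.IsHermitian) (hU : U.PosSemidef) (f : ℝ → ℝ) (hf : ContDiff ℝ 1 f)
    (a b : ℝ) (ha0 : 0 ≤ a) (hab : a ≤ b) (hb1 : b ≤ 1) :
    ∫ t in a..b, (U * matFun (deriv f) (H + t • U)).trace
      = (matFun f (H + b • U)).trace - (matFun f (H + a • U)).trace := by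
  classical
  have hAt : ∀ t : ℝ, (H + t • U).IsHermitian := by
    intro t
    refine hH.add ?_
    have h1 : (t • U)ᴴ = t • U := by
      rw [conjTranspose_smul, star_trivial, hU.1]
    exact h1
  have hm : ∀ (g : ℝ → ℝ) (t : ℝ), matFun g (H + t • U) = (hAt t).cfc g :=
    fun g t => dif_pos (hAt t)
  set R : ℝ := (‖H‖ + ‖U‖) * ‖(1 : Matrix (Fin n) (Fin n) ℝ)‖ with hRdef
  have hR : 0 ≤ R := mul_nonneg (by positivity) (norm_nonneg _)
  have heig : ∀ t ∈ Set.Icc a b, ∀ i, (hAt t).eigenvalues i ∈ Set.Icc (-R) R := by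
    intro t ht i
    have h1 : |(hAt t).eigenvalues i| ≤ ‖H + t • U‖ * ‖(1 : Matrix (Fin n) (Fin n) ℝ)‖ :=
      eig_abs_le (hAt t) i
    have h2 : ‖H + t • U‖ ≤ ‖H‖ + ‖U‖ :=
      norm_affine_le H U (le_trans ha0 ht.1) (le_trans ht.2 hb1)
    have h3 : |(hAt t).eigenvalues i| ≤ R := by
      refine h1.trans ?_
      exact mul_le_mul_of_nonneg_right h2 (norm_nonneg _)
    exact abs_le.1 h3
  -- the sequence of polynomials
  have hexist : ∀ k : ℕ, ∃ p : ℝ[X],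
      (∀ x ∈ Set.Icc (-R) R, |p.eval x - f x| ≤ 1 / (k + 1)) ∧
      (∀ x ∈ Set.Icc (-R) R, |p.derivative.eval x - deriv f x| ≤ 1 / (k + 1)) :=
    fun k => exists_poly_approx f hf R hR (by positivity)
  choose p hp1 hp2 using hexist
  set φ : ℝ → ℝ := fun t => (U * (hAt t).cfc (deriv f)).trace with hφdef
  set G : ℝ → ℝ := fun t => ((hAt t).cfc f).trace with hGdef
  set hseq : ℕ → ℝ → ℝ :=
    fun k t => (U * Polynomial.aeval (H + t • U) (p k).derivative).trace with hhdef
  set gseq : ℕ → ℝ → ℝ :=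
    fun k t => (Polynomial.aeval (H + t • U) (p k)).trace with hgdef
  -- pointwise error bounds
  have hE2 : ∀ (k : ℕ), ∀ t ∈ Set.Icc a b, |hseq k t - φ t| ≤ U.trace * (1 / (k + 1)) := by
    intro k t ht
    have h1 : hseq k t - φ t
        = (U * (hAt t).cfc (fun x => (p k).derivative.eval x - deriv f x)).trace := by
      simp only [hhdef, hφdef]
      rw [aeval_eq_cfc (hAt t), ← cfc_sub' (hAt t), mul_sub, trace_sub]
    rw [h1]
    refine trace_mul_cfc_bound (hAt t) hU _ fun i => ?_
    exact hp2 k _ (heig t ht i)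
  have hE1 : ∀ (k : ℕ), ∀ t ∈ Set.Icc a b, |gseq k t - G t| ≤ n * (1 / (k + 1)) := by
    intro k t ht
    have h1 : gseq k t - G t
        = ((hAt t).cfc (fun x => (p k).eval x - f x)).trace := by
      simp only [hgdef, hGdef]
      rw [aeval_eq_cfc (hAt t), ← cfc_sub' (hAt t), trace_sub]
    rw [h1, trace_cfc']
    calc |∑ i, ((p k).eval ((hAt t).eigenvalues i) - f ((hAt t).eigenvalues i))|
        ≤ ∑ i : Fin n, |(p k).eval ((hAt t).eigenvalues i) - f ((hAt t).eigenvalues i)| :=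
          Finset.abs_sum_le_sum_abs _ _
      _ ≤ ∑ _i : Fin n, 1 / ((k : ℝ) + 1) :=
          Finset.sum_le_sum fun i _ => hp1 k _ (heig t ht i)
      _ = n * (1 / (k + 1)) := by simp [mul_comm]
  -- FTC for each k
  have hFTC : ∀ k : ℕ, ∫ t in a..b, hseq k t = gseq k b - gseq k a := by
    intro k
    exact intervalIntegral.integral_eq_sub_of_hasDerivAt
      (fun t _ => hasDerivAt_trace_aeval H U (p k) t)
      ((continuous_trace_aeval H U U (p k).derivative).intervalIntegrable a b)
  -- tendsto of the error bound
  have hzero : Filter.Tendsto (fun k : ℕ => 1 / ((k : ℝ) + 1)) Filter.atTop (nhds 0) :=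
    tendsto_one_div_add_atTop_nhds_zero_nat
  -- uniform convergence and continuity of φ
  have hTU : TendstoUniformlyOn (fun k t => hseq k t) φ Filter.atTop (Set.Icc a b) := by
    rw [Metric.tendstoUniformlyOn_iff]
    intro ε hε
    have h1 : Filter.Tendsto (fun k : ℕ => U.trace * (1 / ((k : ℝ) + 1)))
        Filter.atTop (nhds 0) := by simpa using hzero.const_mul U.trace
    filter_upwards [h1.eventually (gt_mem_nhds hε)] with k hk t ht
    have := hE2 k t ht
    rw [Real.dist_eq, abs_sub_comm]
    exact lt_of_le_of_lt this hk
  have hφcont : ContinuousOn φ (Set.Icc a b) :=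
    hTU.continuousOn (Filter.Frequently.of_forall fun k =>
      (continuous_trace_aeval H U U (p k).derivative).continuousOn)
  have hφint : IntervalIntegrable φ MeasureTheory.volume a b := by
    apply ContinuousOn.intervalIntegrable
    rwa [Set.uIcc_of_le hab]
  -- limit of integrals
  have T1 : Filter.Tendsto (fun k => ∫ t in a..b, hseq k t) Filter.atTop
      (nhds (∫ t in a..b, φ t)) := by
    rw [tendsto_iff_dist_tendsto_zero]
    have hub : ∀ k : ℕ, dist (∫ t in a..b, hseq k t) (∫ t in a..b, φ t)
        ≤ U.trace * (1 / (k+1)) * |b - a| := by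
      intro k
      rw [Real.dist_eq]
      have hsub : (∫ t in a..b, hseq k t) - ∫ t in a..b, φ t
          = ∫ t in a..b, (hseq k t - φ t) := by
        rw [intervalIntegral.integral_sub
          ((continuous_trace_aeval H U U (p k).derivative).intervalIntegrable a b) hφint]
      rw [hsub]
      have hb : ∀ x ∈ Set.uIoc a b, ‖hseq k x - φ x‖ ≤ U.trace * (1 / (k+1)) := by
        intro x hx
        rw [Set.uIoc_of_le hab] at hx
        rw [Real.norm_eq_abs]
        exact hE2 k x (Set.Ioc_subset_Icc_self hx)
      have h5 := intervalIntegral.norm_integral_le_of_norm_le_const hb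
      rwa [Real.norm_eq_abs] at h5
    exact squeeze_zero (fun k => dist_nonneg) hub
      (by simpa using (hzero.const_mul U.trace).mul_const |b - a|)
  have Ta : Filter.Tendsto (fun k => gseq k a) Filter.atTop (nhds (G a)) := by
    rw [tendsto_iff_dist_tendsto_zero]
    exact squeeze_zero (g := fun k : ℕ => (n:ℝ) * (1/(k+1))) (fun k => dist_nonneg)
      (fun k => by rw [Real.dist_eq]; exact hE1 k a (Set.left_mem_Icc.2 hab))
      (by simpa using hzero.const_mul (n:ℝ))
  have Tb : Filter.Tendsto (fun k => gseq k b) Filter.atTop (nhds (G b)) := by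
    rw [tendsto_iff_dist_tendsto_zero]
    exact squeeze_zero (g := fun k : ℕ => (n:ℝ) * (1/(k+1))) (fun k => dist_nonneg)
      (fun k => by rw [Real.dist_eq]; exact hE1 k b (Set.right_mem_Icc.2 hab))
      (by simpa using hzero.const_mul (n:ℝ))
  have T2 := Tb.sub Ta
  have key : (∫ t in a..b, φ t) = G b - G a :=
    tendsto_nhds_unique (T1.congr hFTC) T2
  simp only [hm]
  exact key
end Main

/-- The Birman–Solomyak formula in the finite-dimensional setting:
`∫_δ^{1-δ} Tr(U f'(H + tU)) dt = Tr f(H + (1-δ)U) - Tr f(H + δU)`. -/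
theorem birman_solomyak (n : ℕ) (H U : Matrix (Fin n) (Fin n) ℝ)
    (hH : H.IsHermitian) (hU : U.PosSemidef) (f : ℝ → ℝ) (hf : ContDiff ℝ 1 f)
    (hf' : ∃ M : ℝ, ∀ x, |deriv f x| ≤ M) (δ : ℝ) (hδ0 : 0 ≤ δ) (hδ1 : δ ≤ 1 / 2) :
    ∫ t in δ..(1 - δ), (U * matFun (deriv f) (H + t • U)).trace
      = (matFun f (H + (1 - δ) • U)).trace - (matFun f (H + δ • U)).trace := by
  exact main_bs n H U hH hU f hf δ (1 - δ) hδ0 (by linarith) (by linarith)
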